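/- Let V = ℂ³ with Hermitian form of signature (-,+,+), let W ⊆ V be a real 2-dimensional subspace on which the form is real-valued with signature (-,+), and let u be a unit vector orthogonal to W + iW. Then for every x ∈ W with ⟨x,x⟩ < 0, the complex 2-dimensional subspace ℂx + ℂu has Hermitian form of signature (-,+); i.e., each slice of the bisector with real spine defined by W is a complex geodesic. -/

import Mathlib

/-- The Hermitian form of signature `(-,+,+)` on `ℂ³`. -/
noncomputable def herm (x y : Fin 3 → ℂ) : ℂ :=
  -(x 0 * star (y 0)) + x 1 * star (y 1) + x 2 * star (y 2)

lemma herm_add_left (x y z : Fin 3 → ℂ) : herm (x + y) z = herm x z + herm y z := by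
  simp [herm]; ring

lemma herm_smul_left (c : ℂ) (x y : Fin 3 → ℂ) : herm (c • x) y = c * herm x y := by
  simp [herm]; ring

lemma herm_smul_right (c : ℂ) (x y : Fin 3 → ℂ) : herm x (c • y) = star c * herm x y := by
  simp [herm, star_mul']; ring

lemma herm_add_right (x y z : Fin 3 → ℂ) : herm x (y + z) = herm x y + herm x z := by
  simp [herm, star_add]; ring

lemma herm_conj (x y : Fin 3 → ℂ) : herm y x = star (herm x y) := by
  simp [herm, star_add, star_mul', star_neg]; ring

/-- Every slice `ℂx + ℂu` of a bisector is a complex geodesic: the complex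
2-dimensional subspace has signature `(-,+)`.  The real spine subspace `W`
is spanned over `ℝ` by an orthonormal basis `w₁, w₂` with signs `-,+`, and
`u` is a unit vector orthogonal to `W + iW`. -/
theorem stmt_17 (w₁ w₂ u : Fin 3 → ℂ)
    (h11 : herm w₁ w₁ = -1) (h22 : herm w₂ w₂ = 1) (h12 : herm w₁ w₂ = 0)
    (huu : herm u u = 1) (hu1 : herm u w₁ = 0) (hu2 : herm u w₂ = 0)
    (a b : ℝ) (x : Fin 3 → ℂ) (hx : x = (a : ℂ) • w₁ + (b : ℂ) • w₂)
    (hneg : (herm x x).re < 0) :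
    ∃ f₁ f₂ : Fin 3 → ℂ,
      Submodule.span ℂ ({x, u} : Set (Fin 3 → ℂ)) =
        Submodule.span ℂ ({f₁, f₂} : Set (Fin 3 → ℂ)) ∧
      herm f₁ f₁ = -1 ∧ herm f₂ f₂ = 1 ∧ herm f₁ f₂ = 0 := by
  have h21 : herm w₂ w₁ = 0 := by rw [herm_conj, h12, star_zero]
  have h1u : herm w₁ u = 0 := by rw [herm_conj, hu1, star_zero]
  have h2u : herm w₂ u = 0 := by rw [herm_conj, hu2, star_zero]
  have hstar : ∀ r : ℝ, star (r : ℂ) = (r : ℂ) := fun r => Complex.conj_ofReal r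
  have hxx : herm x x = ((b ^ 2 - a ^ 2 : ℝ) : ℂ) := by
    rw [hx]
    simp only [herm_add_left, herm_add_right, herm_smul_left, herm_smul_right, hstar,
      h11, h22, h12, h21]
    push_cast
    ring
  have hxu : herm x u = 0 := by
    rw [hx]
    simp only [herm_add_left, herm_smul_left, h1u, h2u]
    ring
  have hba : b ^ 2 - a ^ 2 < 0 := by
    have := hneg
    rw [hxx, Complex.ofReal_re] at this
    exact this
  set c : ℝ := Real.sqrt (a ^ 2 - b ^ 2) with hc
  have hcpos : 0 < c := Real.sqrt_pos.mpr (by linarith)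
  have hc2 : c ^ 2 = a ^ 2 - b ^ 2 := Real.sq_sqrt (by linarith)
  have hcne : (c : ℂ) ≠ 0 := by exact_mod_cast hcpos.ne'
  refine ⟨((c : ℂ)⁻¹) • x, u, ?_, ?_, huu, ?_⟩
  · have : ({x, u} : Set (Fin 3 → ℂ)) = insert x {u} := rfl
    rw [show ({x, u} : Set (Fin 3 → ℂ)) = insert x {u} from rfl,
      show ({((c : ℂ)⁻¹) • x, u} : Set (Fin 3 → ℂ)) = insert (((c : ℂ)⁻¹) • x) {u} from rfl,
      Submodule.span_insert, Submodule.span_insert,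
      Submodule.span_singleton_smul_eq (IsUnit.inv (Ne.isUnit hcne)) x]
  · rw [herm_smul_left, herm_smul_right, hxx]
    rw [show star ((c : ℂ)⁻¹) = (c : ℂ)⁻¹ by rw [star_inv₀, hstar]]
    field_simp
    have h : (b : ℝ) ^ 2 - a ^ 2 = -(c * c) := by nlinarith [hc2]
    exact_mod_cast (show (b : ℝ) ^ 2 - a ^ 2 = -c ^ 2 by rw [h]; ring)
  · rw [herm_smul_left, hxu, mul_zero]
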